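/- Fix a column x₀ and a row y₀, and for j, k ∈ {0,1} define the four states Φ_{jk} = (V_{Δ_{x₀}})^j (V_{Γ̃_{y₀}})^k Φ. Then for all j, k ∈ {0,1}: Φ_{jk} ≠ 0; W_{Γ^h_y} Φ_{jk} = (−1)^j Φ_{jk} for every row y; and W_{Γ_x} Φ_{jk} = (−1)^k Φ_{jk} for every column x. In particular the four states Φ_{jk} are pairwise orthogonal. -/

import Mathlib

open Finset

noncomputable section

/-- The Hilbert space of qubits at the elements of `ι`. -/
abbrev QubitSpace (ι : Type*) := (ι → ZMod 2) → ℂ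

/-- Indicator function of a finset, valued in `ZMod 2`. -/
def indicZ2 {ι : Type*} [DecidableEq ι] (S : Finset ι) : ι → ZMod 2 :=
  fun b => if b ∈ S then 1 else 0

/-- The Z-type operator `W_S`. -/
def Wop {ι : Type*} [DecidableEq ι] (S : Finset ι) :
    Module.End ℂ (QubitSpace ι) where
  toFun ψ := fun σ => (-1 : ℂ) ^ (∑ b ∈ S, σ b).val * ψ σ
  map_add' ψ φ := by funext σ; simp [mul_add]
  map_smul' c ψ := by funext σ; simp; ring

/-- The X-type operator `V_S`. -/
def Vop {ι : Type*} [DecidableEq ι] (S : Finset ι) :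
    Module.End ℂ (QubitSpace ι) where
  toFun ψ := fun σ => ψ (σ + indicZ2 S)
  map_add' _ _ := rfl
  map_smul' _ _ := rfl

/-- The inner product `⟨ψ, φ⟩ = ∑_σ conj (ψ σ) · φ σ`. -/
def qInner {ι : Type*} [Fintype ι] [DecidableEq ι] (ψ φ : QubitSpace ι) : ℂ :=
  ∑ σ, (starRingEnd ℂ) (ψ σ) * φ σ

/-- Square root of an involution: `W^{1/2} = (1/2)(1+W) + (i/2)(1−W)`. -/
def sqrtInv {E : Type*} [AddCommGroup E] [Module ℂ E] (W : Module.End ℂ E) :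
    Module.End ℂ E :=
  ((2 : ℂ)⁻¹) • (1 + W) + (Complex.I * (2 : ℂ)⁻¹) • (1 - W)

/-- `W^{a/2}` for `a ∈ {0,1}`: the identity if `a = 0`, `W^{1/2}` if `a = 1`. -/
def halfPow {E : Type*} [AddCommGroup E] [Module ℂ E] (W : Module.End ℂ E)
    (a : ℕ) : Module.End ℂ E :=
  if a = 0 then 1 else sqrtInv W

/-- The post-strategy state `ψ' = (∏_j W_{Γ_j}^{a_j/2}) ψ` (the factors are
commuting diagonal operators, so the order of the product is immaterial). -/
def postState {ι : Type*} [DecidableEq ι] {T : ℕ} (Γ : Fin T → Finset ι)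
    (a : Fin T → ℕ) (ψ : QubitSpace ι) : QubitSpace ι :=
  ((List.ofFn fun j => halfPow (Wop (Γ j)) (a j)).prod) ψ

/-- The X-basis vector `χ_y(σ) = 2^{−|ι|/2} (−1)^{∑_b σ(b)·y(b)}`. -/
def chi {ι : Type*} [Fintype ι] (y : ι → ZMod 2) : QubitSpace ι :=
  fun σ => (((Real.sqrt 2 ^ Fintype.card ι)⁻¹ : ℝ) : ℂ) *
    (-1 : ℂ) ^ (∑ b, (σ b).val * (y b).val)

/-- `r = ((∑_j a_j)/2) mod 2 ∈ ZMod 2`. -/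
def rOf {T : ℕ} (a : Fin T → ℕ) : ZMod 2 := (((∑ j, a j) / 2 : ℕ) : ZMod 2)

/-- The winning probability on input `a`:
`p(ψ, a) = ∑_{y : ∑_{b ∈ Γ̃} y b = r} |⟨χ_y, ψ'⟩|²`. -/
def winProb {ι : Type*} [Fintype ι] [DecidableEq ι] {T : ℕ}
    (Γ : Fin T → Finset ι) (Γt : Finset ι) (a : Fin T → ℕ)
    (ψ : QubitSpace ι) : ℝ :=
  ∑ y ∈ univ.filter (fun y : ι → ZMod 2 => ∑ b ∈ Γt, y b = rOf a),
    ‖qInner (chi y) (postState Γ a ψ)‖ ^ 2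

/-- The quantum winning probability: the average of `p(ψ, a)` over the
`2^{T−1}` valid inputs `a` (those with `∑_j a_j` even). -/
def quantumWinProb {ι : Type*} [Fintype ι] [DecidableEq ι] {T : ℕ}
    (Γ : Fin T → Finset ι) (Γt : Finset ι) (ψ : QubitSpace ι) : ℝ :=
  (∑ a ∈ univ.filter (fun a : Fin T → Fin 2 => Even (∑ j, (a j : ℕ))),
      winProb Γ Γt (fun j => (a j : ℕ)) ψ) / 2 ^ (T - 1)

/-- The computational basis vector `δ_σ`. -/
def deltaVec {ι : Type*} [DecidableEq (ι → ZMod 2)] (σ : ι → ZMod 2) :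
    QubitSpace ι :=
  fun τ => if τ = σ then 1 else 0

/-! ### The square lattice on the torus -/

variable (Lx Ly : ℕ)

/-- Vertices of the `L_x × L_y` square lattice on the torus. -/
abbrev Vertex := ZMod Lx × ZMod Ly

/-- Bonds of the lattice: `((x,y), 0)` is the horizontal bond from `(x,y)` to
`(x+1,y)`, and `((x,y), 1)` the vertical bond from `(x,y)` to `(x,y+1)`. -/
abbrev Bond := (ZMod Lx × ZMod Ly) × Fin 2

variable [NeZero Lx] [NeZero Ly]

/-- The vertical Wilson loop `Γ_x = {((x,y),1) : y}`. -/
def gammaV (x : ZMod Lx) : Finset (Bond Lx Ly) :=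
  univ.filter (fun b => b.1.1 = x ∧ b.2 = 1)

/-- The horizontal Wilson loop `Γ^h_y = {((x,y),0) : x}`. -/
def gammaH (y : ZMod Ly) : Finset (Bond Lx Ly) :=
  univ.filter (fun b => b.1.2 = y ∧ b.2 = 0)

/-- The horizontal dual loop `Γ̃_y = {((x,y),1) : x}`. -/
def dualH (y : ZMod Ly) : Finset (Bond Lx Ly) :=
  univ.filter (fun b => b.1.2 = y ∧ b.2 = 1)

/-- The vertical dual loop `Δ_x = {((x,y),0) : y}`. -/
def dualV (x : ZMod Lx) : Finset (Bond Lx Ly) :=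
  univ.filter (fun b => b.1.1 = x ∧ b.2 = 0)

/-- The plaquette `P(x,y) = {((x,y),0), ((x,y),1), ((x,y+1),0), ((x+1,y),1)}`. -/
def plaqSet (v : Vertex Lx Ly) : Finset (Bond Lx Ly) :=
  {(v, 0), (v, 1), ((v.1, v.2 + 1), 0), ((v.1 + 1, v.2), 1)}

/-- The star `S(x,y) = {((x,y),0), ((x,y),1), ((x−1,y),0), ((x,y−1),1)}`. -/
def starSet (v : Vertex Lx Ly) : Finset (Bond Lx Ly) :=
  {(v, 0), (v, 1), ((v.1 - 1, v.2), 0), ((v.1, v.2 - 1), 1)}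

/-- The plaquette operator `A_{(x,y)} = W_{P(x,y)}`. -/
def Aop (v : Vertex Lx Ly) : Module.End ℂ (QubitSpace (Bond Lx Ly)) :=
  Wop (plaqSet Lx Ly v)

/-- The star operator `B_{(x,y)} = V_{S(x,y)}`. -/
def Bop (v : Vertex Lx Ly) : Module.End ℂ (QubitSpace (Bond Lx Ly)) :=
  Vop (starSet Lx Ly v)

/-- The basis vector at the all-zeros configuration. -/
def delta0 : QubitSpace (Bond Lx Ly) := fun σ => if σ = 0 then 1 else 0

/-- The star projector `(1/2)(1 + B_v)`. -/
def starProj (v : Vertex Lx Ly) : Module.End ℂ (QubitSpace (Bond Lx Ly)) :=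
  ((2 : ℂ)⁻¹) • (1 + Bop Lx Ly v)

lemma vop_commute {ι : Type*} [DecidableEq ι] (S T : Finset ι) :
    Commute (Vop S) (Vop T) := by
  apply LinearMap.ext; intro ψ; funext σ
  simp only [Module.End.mul_apply]
  show ψ (σ + indicZ2 S + indicZ2 T) = ψ (σ + indicZ2 T + indicZ2 S)
  rw [add_right_comm]

lemma starProj_commute (v w : Vertex Lx Ly) :
    Commute (starProj Lx Ly v) (starProj Lx Ly w) := by
  have h : Commute (Bop Lx Ly v) (Bop Lx Ly w) := vop_commute _ _
  have h1 : Commute (1 + Bop Lx Ly v) (1 + Bop Lx Ly w) :=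
    (Commute.one_left _).add_left (((Commute.one_right _).add_right h))
  exact (h1.smul_left _).smul_right _

/-- The (unnormalized) zero-flux ground state
`Φ = (∏_v (1/2)(1 + B_v)) δ₀` (the star projectors commute, so the product
is well-defined). -/
def Phi : QubitSpace (Bond Lx Ly) :=
  (Finset.univ.noncommProd (fun v : Vertex Lx Ly => starProj Lx Ly v)
    (fun v _ w _ _ => starProj_commute Lx Ly v w)) (delta0 Lx Ly)

/-- The norm induced by the inner product. -/
def qNorm {ι : Type*} [Fintype ι] [DecidableEq ι] (ψ : QubitSpace ι) : ℝ :=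
  Real.sqrt (qInner ψ ψ).re

set_option linter.unusedSectionVars false

-- sign lemma
lemma zmod2_sign (a b : ZMod 2) :
    ((-1 : ℂ)) ^ (a + b).val = (-1) ^ a.val * (-1) ^ b.val := by
  rw [ZMod.val_add, ← neg_one_pow_eq_pow_mod_two, pow_add]

lemma Wop_apply {ι : Type*} [DecidableEq ι] (S : Finset ι) (ψ : QubitSpace ι)
    (σ : ι → ZMod 2) : Wop S ψ σ = (-1 : ℂ) ^ (∑ b ∈ S, σ b).val * ψ σ := rfl

lemma Vop_apply {ι : Type*} [DecidableEq ι] (S : Finset ι) (ψ : QubitSpace ι)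
    (σ : ι → ZMod 2) : Vop S ψ σ = ψ (σ + indicZ2 S) := rfl

lemma WV_comm {ι : Type*} [DecidableEq ι] (S T : Finset ι) :
    Wop S * Vop T =
      ((-1 : ℂ) ^ (∑ b ∈ S, indicZ2 T b).val) • (Vop T * Wop S) := by
  apply LinearMap.ext; intro ψ; funext σ
  simp only [Module.End.mul_apply, LinearMap.smul_apply, Pi.smul_apply, smul_eq_mul,
    Wop_apply, Vop_apply]
  have h : ∑ b ∈ S, (σ + indicZ2 T) b = (∑ b ∈ S, σ b) + ∑ b ∈ S, indicZ2 T b := by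
    simp [Finset.sum_add_distrib]
  rw [h, zmod2_sign]
  have h2 : ((-1 : ℂ) ^ (∑ b ∈ S, indicZ2 T b).val) *
      ((-1 : ℂ) ^ (∑ b ∈ S, indicZ2 T b).val) = 1 := by
    rw [← pow_add]; exact Even.neg_one_pow ⟨_, rfl⟩
  calc (-1 : ℂ) ^ (∑ b ∈ S, σ b).val * ψ (σ + indicZ2 T)
      = ((-1 : ℂ) ^ (∑ b ∈ S, indicZ2 T b).val * (-1) ^ (∑ b ∈ S, indicZ2 T b).val) *
        ((-1 : ℂ) ^ (∑ b ∈ S, σ b).val * ψ (σ + indicZ2 T)) := by rw [h2, one_mul]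
    _ = _ := by ring

lemma Vop_eq_zero {ι : Type*} [DecidableEq ι] (T : Finset ι) (ψ : QubitSpace ι)
    (h : Vop T ψ = 0) : ψ = 0 := by
  funext σ
  have h0 : indicZ2 T + indicZ2 T = 0 := by
    funext b; exact CharTwo.add_self_eq_zero _
  have := congrFun h (σ + indicZ2 T)
  simpa [Vop_apply, add_assoc, h0] using this

lemma sum_indic {ι : Type*} [DecidableEq ι] (S T : Finset ι) :
    ∑ b ∈ S, indicZ2 T b = ((S ∩ T).card : ZMod 2) := by
  simp [indicZ2, Finset.sum_ite_mem]

lemma e_gH_dV (y : ZMod Ly) (x₀ : ZMod Lx) :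
    ∑ b ∈ gammaH Lx Ly y, indicZ2 (dualV Lx Ly x₀) b = 1 := by
  rw [sum_indic]
  have : gammaH Lx Ly y ∩ dualV Lx Ly x₀ = {((x₀, y), 0)} := by
    ext b; simp [gammaH, dualV, Prod.ext_iff]; tauto
  rw [this]; simp

lemma e_gH_dH (y y₀ : ZMod Ly) :
    ∑ b ∈ gammaH Lx Ly y, indicZ2 (dualH Lx Ly y₀) b = 0 := by
  rw [sum_indic]
  have : gammaH Lx Ly y ∩ dualH Lx Ly y₀ = ∅ := by
    ext b; simp [gammaH, dualH]; rintro - h - h'; rw [h] at h'; exact absurd h' (by decide)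
  rw [this]; simp

lemma e_gV_dH (x : ZMod Lx) (y₀ : ZMod Ly) :
    ∑ b ∈ gammaV Lx Ly x, indicZ2 (dualH Lx Ly y₀) b = 1 := by
  rw [sum_indic]
  have : gammaV Lx Ly x ∩ dualH Lx Ly y₀ = {((x, y₀), 1)} := by
    ext b; simp [gammaV, dualH, Prod.ext_iff]; tauto
  rw [this]; simp

lemma e_gV_dV (x x₀ : ZMod Lx) :
    ∑ b ∈ gammaV Lx Ly x, indicZ2 (dualV Lx Ly x₀) b = 0 := by
  rw [sum_indic]
  have : gammaV Lx Ly x ∩ dualV Lx Ly x₀ = ∅ := by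
    ext b; simp [gammaV, dualV]; rintro - h - h'; rw [h] at h'; exact absurd h' (by decide)
  rw [this]; simp

lemma one_smul_ne_zero (Lx : ℕ) (hLx : 2 ≤ Lx) : (1 : ZMod Lx) ≠ 0 := by
  intro h
  have : Lx ∣ 1 := by
    haveI : NeZero Lx := ⟨by omega⟩
    exact (ZMod.natCast_eq_zero_iff 1 Lx).mp (by simpa using h)
  have := Nat.le_of_dvd one_pos this
  omega

lemma e_gH_star (hLx : 2 ≤ Lx) (y : ZMod Ly) (v : Vertex Lx Ly) :
    ∑ b ∈ gammaH Lx Ly y, indicZ2 (starSet Lx Ly v) b = 0 := by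
  rw [sum_indic]
  have hx : v.1 - 1 ≠ v.1 := by
    intro h
    exact one_smul_ne_zero Lx hLx (by linear_combination -h)
  by_cases hy : v.2 = y
  · have : gammaH Lx Ly y ∩ starSet Lx Ly v = {(v, 0), ((v.1 - 1, v.2), 0)} := by
      ext b; simp only [Finset.mem_inter, Finset.mem_insert, Finset.mem_singleton,
        gammaH, starSet, Finset.mem_filter, Finset.mem_univ, true_and, Prod.ext_iff]
      constructor
      · rintro ⟨⟨h1, h2⟩, h3⟩
        rcases h3 with ⟨⟨ha,hb⟩,hc⟩|⟨⟨ha,hb⟩,hc⟩|⟨⟨ha,hb⟩,hc⟩|⟨⟨ha,hb⟩,hc⟩ <;> simp_all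
      · rintro (⟨⟨ha,hb⟩,hc⟩|⟨⟨ha,hb⟩,hc⟩) <;> simp_all [hy]
    rw [this, Finset.card_insert_of_notMem
        (by simp [Prod.ext_iff]; exact fun h => absurd h.symm hx),
      Finset.card_singleton]
    decide
  · have : gammaH Lx Ly y ∩ starSet Lx Ly v = ∅ := by
      ext b; simp [gammaH, starSet, Prod.ext_iff]
      rintro h1 h2
      refine ⟨?_, ?_, ?_, ?_⟩ <;> intro ha hb <;> simp_all
    rw [this]; simp

lemma e_gV_star (hLy : 2 ≤ Ly) (x : ZMod Lx) (v : Vertex Lx Ly) :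
    ∑ b ∈ gammaV Lx Ly x, indicZ2 (starSet Lx Ly v) b = 0 := by
  rw [sum_indic]
  have hx : v.2 - 1 ≠ v.2 := by
    intro h
    exact one_smul_ne_zero Ly hLy (by linear_combination -h)
  by_cases hy : v.1 = x
  · have : gammaV Lx Ly x ∩ starSet Lx Ly v = {(v, 1), ((v.1, v.2 - 1), 1)} := by
      ext b; simp only [Finset.mem_inter, Finset.mem_insert, Finset.mem_singleton,
        gammaV, starSet, Finset.mem_filter, Finset.mem_univ, true_and, Prod.ext_iff]
      constructor
      · rintro ⟨⟨h1, h2⟩, h3⟩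
        rcases h3 with ⟨⟨ha,hb⟩,hc⟩|⟨⟨ha,hb⟩,hc⟩|⟨⟨ha,hb⟩,hc⟩|⟨⟨ha,hb⟩,hc⟩ <;> simp_all
      · rintro (⟨⟨ha,hb⟩,hc⟩|⟨⟨ha,hb⟩,hc⟩) <;> simp_all [hy]
    rw [this, Finset.card_insert_of_notMem
        (by simp [Prod.ext_iff]; intro h; exact absurd h.symm hx),
      Finset.card_singleton]
    decide
  · have : gammaV Lx Ly x ∩ starSet Lx Ly v = ∅ := by
      refine Finset.eq_empty_iff_forall_notMem.mpr ?_
      rintro b hb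
      simp only [Finset.mem_inter, gammaV, Finset.mem_filter, Finset.mem_univ, true_and,
        starSet, Finset.mem_insert, Finset.mem_singleton, Prod.ext_iff] at hb
      obtain ⟨⟨h1, h2⟩, h3⟩ := hb
      rcases h3 with ⟨⟨ha,hb'⟩,hc⟩|⟨⟨ha,hb'⟩,hc⟩|⟨⟨ha,hb'⟩,hc⟩|⟨⟨ha,hb'⟩,hc⟩ <;> simp_all
    rw [this]; simp

-- commuting W with the projectors when star-intersection is even
lemma W_commute_starProj (S : Finset (Bond Lx Ly))
    (h : ∀ v : Vertex Lx Ly, ∑ b ∈ S, indicZ2 (starSet Lx Ly v) b = 0)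
    (v : Vertex Lx Ly) : Commute (Wop S) (starProj Lx Ly v) := by
  have hB : Commute (Wop S) (Bop Lx Ly v) := by
    unfold Commute SemiconjBy
    rw [Bop, WV_comm, h v]
    simp
  exact ((Commute.one_right _).add_right hB).smul_right _

lemma W_Phi (S : Finset (Bond Lx Ly))
    (h : ∀ v : Vertex Lx Ly, ∑ b ∈ S, indicZ2 (starSet Lx Ly v) b = 0) :
    Wop S (Phi Lx Ly) = Phi Lx Ly := by
  have hc : Commute (Wop S)
      (Finset.univ.noncommProd (fun v : Vertex Lx Ly => starProj Lx Ly v)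
        (fun v _ w _ _ => starProj_commute Lx Ly v w)) :=
    Finset.noncommProd_commute _ _ _ _ (fun v _ => W_commute_starProj Lx Ly S h v)
  have hδ : Wop S (delta0 Lx Ly) = delta0 Lx Ly := by
    funext σ
    rw [Wop_apply]
    unfold delta0
    by_cases hσ : σ = 0
    · subst hσ; simp
    · simp [hσ]
  calc Wop S (Phi Lx Ly)
      = (Wop S * Finset.univ.noncommProd (fun v : Vertex Lx Ly => starProj Lx Ly v)
          (fun v _ w _ _ => starProj_commute Lx Ly v w)) (delta0 Lx Ly) := rfl
    _ = (Finset.univ.noncommProd (fun v : Vertex Lx Ly => starProj Lx Ly v)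
          (fun v _ w _ _ => starProj_commute Lx Ly v w) * Wop S) (delta0 Lx Ly) := by rw [hc]
    _ = _ := by rw [Module.End.mul_apply, hδ]; rfl

def PosState (ψ : QubitSpace (Bond Lx Ly)) : Prop :=
  (∀ σ, 0 ≤ (ψ σ).re ∧ (ψ σ).im = 0) ∧ 0 < (ψ 0).re

lemma starProj_apply' (v : Vertex Lx Ly) (ψ : QubitSpace (Bond Lx Ly))
    (σ : (Bond Lx Ly) → ZMod 2) :
    starProj Lx Ly v ψ σ = (2 : ℂ)⁻¹ * (ψ σ + ψ (σ + indicZ2 (starSet Lx Ly v))) := by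
  simp [starProj, Bop, Vop_apply]
  ring

lemma posState_starProj (v : Vertex Lx Ly) (ψ : QubitSpace (Bond Lx Ly))
    (h : PosState Lx Ly ψ) : PosState Lx Ly (starProj Lx Ly v ψ) := by
  have h2 : ((2 : ℂ)⁻¹) = ((2⁻¹ : ℝ) : ℂ) := by norm_num
  constructor
  · intro σ
    rw [starProj_apply', h2]
    constructor
    · rw [Complex.re_ofReal_mul]
      have := (h.1 σ).1; have := (h.1 (σ + indicZ2 (starSet Lx Ly v))).1
      simp only [Complex.add_re]
      positivity
    · rw [Complex.im_ofReal_mul]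
      have := (h.1 σ).2; have := (h.1 (σ + indicZ2 (starSet Lx Ly v))).2
      simp only [Complex.add_im]
      rw [(h.1 σ).2, (h.1 (σ + indicZ2 (starSet Lx Ly v))).2]
      simp
  · rw [starProj_apply', h2, Complex.re_ofReal_mul]
    have h1 := h.2
    have h3 := (h.1 (0 + indicZ2 (starSet Lx Ly v))).1
    simp only [Complex.add_re]
    nlinarith

lemma phi_pos : PosState Lx Ly (Phi Lx Ly) := by
  unfold Phi
  have key : ∀ s : Finset (Vertex Lx Ly),
      PosState Lx Ly ((s.noncommProd (fun v : Vertex Lx Ly => starProj Lx Ly v)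
        (fun v _ w _ _ => starProj_commute Lx Ly v w)) (delta0 Lx Ly)) := by
    intro s
    induction s using Finset.induction_on with
    | empty =>
      show PosState Lx Ly ((1 : Module.End ℂ (QubitSpace (Bond Lx Ly))) (delta0 Lx Ly))
      constructor
      · intro σ; simp only [Module.End.one_apply]; unfold delta0; split <;> simp
      · simp only [Module.End.one_apply]; unfold delta0; simp
    | @insert a s ha ih =>
      rw [Finset.noncommProd_insert_of_notMem s a _ (fun v _ w _ _ => starProj_commute Lx Ly v w) ha]
      exact posState_starProj Lx Ly a _ ih
  exact key Finset.univ

lemma phi_ne_zero : Phi Lx Ly ≠ 0 := by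
  intro h
  have := (phi_pos Lx Ly).2
  rw [h] at this
  simp at this

lemma qInner_W {ι : Type*} [Fintype ι] [DecidableEq ι] (S : Finset ι)
    (ψ φ : QubitSpace ι) : qInner (Wop S ψ) (Wop S φ) = qInner ψ φ := by
  unfold qInner
  apply Finset.sum_congr rfl
  intro σ _
  rw [Wop_apply, Wop_apply]
  have hc : (starRingEnd ℂ) ((-1 : ℂ) ^ (∑ b ∈ S, σ b).val) =
      (-1 : ℂ) ^ (∑ b ∈ S, σ b).val := by rw [map_pow, map_neg, map_one]
  have h2 : ((-1 : ℂ) ^ (∑ b ∈ S, σ b).val) * ((-1 : ℂ) ^ (∑ b ∈ S, σ b).val) = 1 := by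
    rw [← pow_add]; exact Even.neg_one_pow ⟨_, rfl⟩
  calc (starRingEnd ℂ) ((-1 : ℂ) ^ (∑ b ∈ S, σ b).val * ψ σ) *
        ((-1 : ℂ) ^ (∑ b ∈ S, σ b).val * φ σ)
      = (((-1 : ℂ) ^ (∑ b ∈ S, σ b).val) * ((-1 : ℂ) ^ (∑ b ∈ S, σ b).val)) *
        ((starRingEnd ℂ) (ψ σ) * φ σ) := by rw [map_mul, hc]; ring
    _ = (starRingEnd ℂ) (ψ σ) * φ σ := by rw [h2, one_mul]

lemma qInner_smul_smul {ι : Type*} [Fintype ι] [DecidableEq ι] (c d : ℂ)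
    (ψ φ : QubitSpace ι) :
    qInner (c • ψ) (d • φ) = (starRingEnd ℂ) c * d * qInner ψ φ := by
  unfold qInner
  rw [Finset.mul_sum]
  apply Finset.sum_congr rfl
  intro σ _
  simp only [Pi.smul_apply, smul_eq_mul, map_mul]
  ring

lemma orthog_of_eig {ι : Type*} [Fintype ι] [DecidableEq ι] (S : Finset ι)
    (ψ φ : QubitSpace ι) (c d : ℂ) (hψ : Wop S ψ = c • ψ) (hφ : Wop S φ = d • φ)
    (h : (starRingEnd ℂ) c * d = -1) : qInner ψ φ = 0 := by
  have h0 : qInner ψ φ = (starRingEnd ℂ) c * d * qInner ψ φ := by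
    conv_lhs => rw [← qInner_W S ψ φ, hψ, hφ]
    rw [qInner_smul_smul]
  rw [h] at h0
  have h2 : (2 : ℂ) * qInner ψ φ = 0 := by linear_combination h0
  have := mul_eq_zero.mp h2
  simpa using this

/-- the four states `Φ_{jk} = (V_{Δ_{x₀}})^j (V_{Γ̃_{y₀}})^k Φ`
(`j, k ∈ {0,1}`) are nonzero, satisfy `W_{Γ^h_y} Φ_{jk} = (−1)^j Φ_{jk}` for
every row `y` and `W_{Γ_x} Φ_{jk} = (−1)^k Φ_{jk}` for every column `x`, and in
particular are pairwise orthogonal. -/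
theorem topological_sectors (Lx Ly : ℕ) [NeZero Lx] [NeZero Ly]
    (hLx : 2 ≤ Lx) (hLy : 2 ≤ Ly) (x₀ : ZMod Lx) (y₀ : ZMod Ly) :
    let Φjk : Fin 2 → Fin 2 → QubitSpace (Bond Lx Ly) := fun j k =>
      ((Vop (dualV Lx Ly x₀)) ^ (j : ℕ))
        (((Vop (dualH Lx Ly y₀)) ^ (k : ℕ)) (Phi Lx Ly))
    (∀ j k : Fin 2, Φjk j k ≠ 0) ∧
      (∀ (j k : Fin 2) (y : ZMod Ly),
        Wop (gammaH Lx Ly y) (Φjk j k) = ((-1 : ℂ) ^ (j : ℕ)) • Φjk j k) ∧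
      (∀ (j k : Fin 2) (x : ZMod Lx),
        Wop (gammaV Lx Ly x) (Φjk j k) = ((-1 : ℂ) ^ (k : ℕ)) • Φjk j k) ∧
      (∀ j k j' k' : Fin 2, (j, k) ≠ (j', k') →
        qInner (Φjk j k) (Φjk j' k') = 0) := by
  intro Φjk
  -- pointwise (anti)commutation facts
  have sign_one : ((1 : ZMod 2)).val = 1 := rfl
  have sign_zero : ((0 : ZMod 2)).val = 0 := rfl
  have anti : ∀ (S T : Finset (Bond Lx Ly)), (∑ b ∈ S, indicZ2 T b) = 1 →
      ∀ ψ, Wop S (Vop T ψ) = -(Vop T (Wop S ψ)) := by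
    intro S T hST ψ
    have h := WV_comm S T
    rw [hST] at h
    have := LinearMap.congr_fun h ψ
    simpa [sign_one, Module.End.mul_apply, pow_one, neg_one_smul] using this
  have comm : ∀ (S T : Finset (Bond Lx Ly)), (∑ b ∈ S, indicZ2 T b) = 0 →
      ∀ ψ, Wop S (Vop T ψ) = Vop T (Wop S ψ) := by
    intro S T hST ψ
    have h := WV_comm S T
    rw [hST] at h
    have := LinearMap.congr_fun h ψ
    simpa [sign_zero, Module.End.mul_apply, pow_zero, one_smul] using this
  have hPhiH : ∀ y : ZMod Ly, Wop (gammaH Lx Ly y) (Phi Lx Ly) = Phi Lx Ly :=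
    fun y => W_Phi Lx Ly _ (fun v => e_gH_star Lx Ly hLx y v)
  have hPhiV : ∀ x : ZMod Lx, Wop (gammaV Lx Ly x) (Phi Lx Ly) = Phi Lx Ly :=
    fun x => W_Phi Lx Ly _ (fun v => e_gV_star Lx Ly hLy x v)
  have eigH : ∀ (j k : Fin 2) (y : ZMod Ly),
      Wop (gammaH Lx Ly y) (Φjk j k) = ((-1 : ℂ) ^ (j : ℕ)) • Φjk j k := by
    intro j k y
    fin_cases j <;> fin_cases k <;>
      simp only [Φjk, Fin.isValue, Fin.val_zero, Fin.val_one, pow_zero, pow_one,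
        Module.End.one_apply, one_smul, neg_one_smul]
    · exact hPhiH y
    · rw [comm _ _ (e_gH_dH Lx Ly y y₀), hPhiH y]
    · rw [anti _ _ (e_gH_dV Lx Ly y x₀), hPhiH y]
    · rw [anti _ _ (e_gH_dV Lx Ly y x₀), comm _ _ (e_gH_dH Lx Ly y y₀), hPhiH y]
  have eigV : ∀ (j k : Fin 2) (x : ZMod Lx),
      Wop (gammaV Lx Ly x) (Φjk j k) = ((-1 : ℂ) ^ (k : ℕ)) • Φjk j k := by
    intro j k x
    fin_cases j <;> fin_cases k <;>
      simp only [Φjk, Fin.isValue, Fin.val_zero, Fin.val_one, pow_zero, pow_one,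
        Module.End.one_apply, one_smul, neg_one_smul]
    · exact hPhiV x
    · rw [anti _ _ (e_gV_dH Lx Ly x y₀), hPhiV x]
    · rw [comm _ _ (e_gV_dV Lx Ly x x₀), hPhiV x]
    · rw [comm _ _ (e_gV_dV Lx Ly x x₀), anti _ _ (e_gV_dH Lx Ly x y₀), hPhiV x, map_neg]
  refine ⟨?_, eigH, eigV, ?_⟩
  · intro j k
    have hV : ∀ (T : Finset (Bond Lx Ly)) (ψ : QubitSpace (Bond Lx Ly)),
        ψ ≠ 0 → Vop T ψ ≠ 0 := fun T ψ h h0 => h (Vop_eq_zero T ψ h0)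
    have hφ := phi_ne_zero Lx Ly
    fin_cases j <;> fin_cases k <;>
      simp only [Φjk, Fin.isValue, Fin.val_zero, Fin.val_one, pow_zero, pow_one,
        Module.End.one_apply] <;>
      first
        | exact hφ
        | exact hV _ _ hφ
        | exact hV _ _ (hV _ _ hφ)
  · intro j k j' k' hne
    have hcase : j ≠ j' ∨ k ≠ k' := by
      by_contra h
      push_neg at h
      exact hne (by rw [h.1, h.2])
    rcases hcase with hj | hk
    · apply orthog_of_eig (gammaH Lx Ly 0) _ _ _ _ (eigH j k 0) (eigH j' k' 0)
      fin_cases j <;> fin_cases j' <;> simp_all <;> norm_num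
    · apply orthog_of_eig (gammaV Lx Ly 0) _ _ _ _ (eigV j k 0) (eigV j' k' 0)
      fin_cases k <;> fin_cases k' <;> simp_all <;> norm_num
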